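/- arXiv:2107.09207 — 3 statements merged into one kernel-verified Lean document; each statement's English description precedes it below -/
import Mathlib

section
/- Let X = diag(2,1,0) and Z_0 = diag(2,0,1) in R^{3×3}. For step size α ∈ (0,1), the Riemannian gradient descent iterates Z_{k+1} = R(Z_k − α P_{T_{Z_k}}(Z_k − X)) on the rank-2 matrix manifold satisfy Z_k = diag(2, 0, (1−α)^k), and hence Z_k converges to diag(2,0,0) as k → ∞. -/
/-- For X = diag(2,1,0), Z₀ = diag(2,0,1) and step size α ∈ (0,1), the
Riemannian gradient descent iterates on the rank-2 manifold are
Z_k = diag(2,0,(1−α)^k), converging to diag(2,0,0). -/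
theorem example_spurious_convergence (α : ℝ) (hα : α ∈ Set.Ioo (0 : ℝ) 1)
    (R : Matrix (Fin 3) (Fin 3) ℝ → Matrix (Fin 3) (Fin 3) ℝ)
    (hR : ∀ W : Matrix (Fin 3) (Fin 3) ℝ, W.rank ≤ 2 → R W = W)
    (PT : Matrix (Fin 3) (Fin 3) ℝ → Matrix (Fin 3) (Fin 3) ℝ →
      Matrix (Fin 3) (Fin 3) ℝ)
    (hPT : ∀ t : ℝ, t ≠ 0 → ∀ Y,
      PT (Matrix.diagonal ![2, 0, t]) Y =
        Matrix.diagonal ![1, 0, 1] * Y + Y * Matrix.diagonal ![1, 0, 1] -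
          Matrix.diagonal ![1, 0, 1] * Y * Matrix.diagonal ![1, 0, 1])
    (X : Matrix (Fin 3) (Fin 3) ℝ) (hX : X = Matrix.diagonal ![2, 1, 0])
    (Z : ℕ → Matrix (Fin 3) (Fin 3) ℝ)
    (hZ0 : Z 0 = Matrix.diagonal ![2, 0, 1])
    (hZrec : ∀ k, Z (k + 1) = R (Z k - α • PT (Z k) (Z k - X))) :
    (∀ k, Z k = Matrix.diagonal ![2, 0, (1 - α) ^ k]) ∧
      Filter.Tendsto Z Filter.atTop (nhds (Matrix.diagonal ![2, 0, 0])) := by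
  obtain ⟨hα0, hα1⟩ := hα
  have h1α : (0:ℝ) < 1 - α := by linarith
  have hne : ∀ k : ℕ, (1 - α) ^ k ≠ 0 := fun k => pow_ne_zero k (ne_of_gt h1α)
  have key : ∀ k, Z k = Matrix.diagonal ![2, 0, (1 - α) ^ k] := by
    intro k
    induction k with
    | zero => simpa using hZ0
    | succ k ih =>
      rw [hZrec, ih, hPT _ (hne k), hX]
      have hW : Matrix.diagonal ![2, 0, (1 - α) ^ k] -
          α • (Matrix.diagonal ![1, 0, 1] *
              (Matrix.diagonal ![2, 0, (1 - α) ^ k] - Matrix.diagonal ![2, 1, 0]) +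
            (Matrix.diagonal ![2, 0, (1 - α) ^ k] - Matrix.diagonal ![2, 1, 0]) *
              Matrix.diagonal ![1, 0, 1] -
            Matrix.diagonal ![1, 0, 1] *
              (Matrix.diagonal ![2, 0, (1 - α) ^ k] - Matrix.diagonal ![2, 1, 0]) *
              Matrix.diagonal ![1, 0, 1]) =
          Matrix.diagonal ![2, 0, (1 - α) ^ (k + 1)] := by
        ext i j
        fin_cases i <;> fin_cases j <;>
          simp [Matrix.mul_apply, Matrix.diagonal, Fin.sum_univ_succ, pow_succ] <;> ring
      rw [hW, hR]
      rw [Matrix.rank_diagonal]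
      have : ∀ i : Fin 3, ![2, 0, (1 - α) ^ (k + 1)] i ≠ 0 → i ≠ 1 := by
        intro i h
        intro hi; subst hi; simp at h
      calc Fintype.card {i : Fin 3 // ![2, 0, (1 - α) ^ (k + 1)] i ≠ 0}
          ≤ Fintype.card {i : Fin 3 // i ≠ 1} :=
            Fintype.card_le_of_injective (fun x => ⟨x.1, this x.1 x.2⟩)
              (fun a b hab => Subtype.ext (by simpa using congrArg Subtype.val hab))
        _ = 2 := by simp [Fintype.card_subtype_compl]
  refine ⟨key, ?_⟩
  have hcont : Continuous (fun t : ℝ => Matrix.diagonal ![2, 0, t]) := by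
    apply Continuous.matrix_diagonal
    apply continuous_pi
    intro i; fin_cases i <;> simp <;> continuity
  have htend : Filter.Tendsto (fun k : ℕ => (1 - α) ^ k) Filter.atTop (nhds 0) := by
    apply tendsto_pow_atTop_nhds_zero_of_lt_one (le_of_lt h1α) (by linarith)
  have := (hcont.tendsto 0).comp htend
  simp only [Function.comp_def] at this
  convert this using 1
  funext k; rw [key k]
end

section
/- Let S : [0,T] → R^{r×r} be symmetric and continuously differentiable with dS/dt ⪰ −σ_min(S) · S for all t, where σ_min(S(t)) > 0 on [0,T] and S(0) positive definite. Then σ_min(S(t)) ≥ σ_min(S(0)) / (1 + t·σ_min(S(0))) for all t ∈ [0,T]. -/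
open Matrix

private lemma smul_one_eq_diag {r : ℕ} (c : ℝ) :
    c • (1 : Matrix (Fin r) (Fin r) ℝ) = Matrix.diagonal (fun _ => c) := by
  ext i j
  by_cases h : i = j <;> simp [Matrix.one_apply, Matrix.diagonal, h]

private lemma rayleigh_lb {r : ℕ} [Nonempty (Fin r)] {A : Matrix (Fin r) (Fin r) ℝ}
    (hA : A.IsHermitian) (x : Fin r → ℝ) :
    (⨅ i, hA.eigenvalues i) * (x ⬝ᵥ x) ≤ x ⬝ᵥ (A *ᵥ x) := by
  set c := ⨅ i, hA.eigenvalues i with hc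
  have hcle : ∀ i, c ≤ hA.eigenvalues i := fun i =>
    ciInf_le (Set.Finite.bddBelow (Set.finite_range _)) i
  set U := (hA.eigenvectorUnitary : Matrix (Fin r) (Fin r) ℝ) with hU
  have hUU : U * star U = 1 := Unitary.coe_mul_star_self hA.eigenvectorUnitary
  have hBeq : A - c • 1 = U * Matrix.diagonal (fun i => hA.eigenvalues i - c) * star U := by
    have hspec : A = U * Matrix.diagonal (RCLike.ofReal ∘ hA.eigenvalues) * star U := hA.spectral_theorem
    have hdiag : Matrix.diagonal (fun i => hA.eigenvalues i - c)
        = Matrix.diagonal (RCLike.ofReal ∘ hA.eigenvalues) - c • (1 : Matrix (Fin r) (Fin r) ℝ) := by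
      rw [smul_one_eq_diag, Matrix.diagonal_sub]
      rfl
    rw [hdiag, Matrix.mul_sub, Matrix.sub_mul, ← hspec]
    congr 1
    rw [Matrix.mul_smul, Matrix.mul_one, Matrix.smul_mul, hUU]
  have hB : (A - c • 1).PosSemidef := by
    rw [hBeq, Matrix.star_eq_conjTranspose]
    exact (Matrix.posSemidef_diagonal_iff.mpr fun i => sub_nonneg.2 (hcle i)).mul_mul_conjTranspose_same U
  have h0 := hB.dotProduct_mulVec_nonneg x
  have hstar : star x = x := by simp
  rw [hstar, Matrix.sub_mulVec, dotProduct_sub, Matrix.smul_mulVec,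
    Matrix.one_mulVec, dotProduct_smul, sub_nonneg, smul_eq_mul] at h0
  exact h0


/-- If S : [0,T] → Sym(r) is C¹ with dS/dt ⪰ −σ_min(S)·S, σ_min(S(t)) > 0 on
[0,T] and S(0) positive definite, then
σ_min(S(t)) ≥ σ_min(S(0))/(1 + t·σ_min(S(0))). -/
theorem eigmin_rescaled_lower_bound (r : ℕ) (hr : 0 < r) (T : ℝ) (hT : 0 ≤ T)
    (S S' : ℝ → Matrix (Fin r) (Fin r) ℝ)
    (hderiv : ∀ t, ∀ i j, HasDerivAt (fun s => S s i j) (S' t i j) t)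
    (hcont : Continuous S')
    (hherm : ∀ t, (S t).IsHermitian)
    (hineq : ∀ t ∈ Set.Icc (0 : ℝ) T,
      (S' t + (⨅ i, (hherm t).eigenvalues i) • S t).PosSemidef)
    (hpos : ∀ t ∈ Set.Icc (0 : ℝ) T, 0 < ⨅ i, (hherm t).eigenvalues i)
    (hpd : (S 0).PosDef) :
    ∀ t ∈ Set.Icc (0 : ℝ) T,
      (⨅ i, (hherm 0).eigenvalues i) /
          (1 + t * ⨅ i, (hherm 0).eigenvalues i) ≤
        ⨅ i, (hherm t).eigenvalues i := by
  haveI : Nonempty (Fin r) := ⟨⟨0, hr⟩⟩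
  intro t ht
  obtain ⟨ht0, htT⟩ := ht
  have h0T : (0:ℝ) ∈ Set.Icc (0:ℝ) T := ⟨le_refl _, hT⟩
  have hμ0 : 0 < ⨅ i, (hherm 0).eigenvalues i := hpos 0 h0T
  have hμt : 0 < ⨅ i, (hherm t).eigenvalues i := hpos t ⟨ht0, htT⟩
  obtain ⟨i0, hi0⟩ := exists_eq_ciInf_of_finite (f := (hherm t).eigenvalues)
  set x : Fin r → ℝ := ⇑((hherm t).eigenvectorBasis i0) with hx
  have hxx : x ⬝ᵥ x = 1 := by
    have h1 : ‖(hherm t).eigenvectorBasis i0‖ = 1 :=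
      (hherm t).eigenvectorBasis.orthonormal.1 i0
    have h2 : (inner ℝ ((hherm t).eigenvectorBasis i0) ((hherm t).eigenvectorBasis i0) : ℝ) = 1 := by
      rw [real_inner_self_eq_norm_sq, h1]; norm_num
    rw [PiLp.inner_apply] at h2
    simpa [dotProduct, RCLike.inner_apply, hx, ← sq] using h2
  set f : ℝ → ℝ := fun s => x ⬝ᵥ (S s *ᵥ x) with hf
  have hfd : ∀ s, HasDerivAt f (x ⬝ᵥ (S' s *ᵥ x)) s := by
    intro s
    simp only [hf, dotProduct, mulVec]
    apply HasDerivAt.fun_sum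
    intro i _
    apply HasDerivAt.const_mul
    apply HasDerivAt.fun_sum
    intro j _
    exact (hderiv s i j).mul_const (x j)
  have hflb : ∀ s ∈ Set.Icc (0:ℝ) T, (⨅ i, (hherm s).eigenvalues i) ≤ f s := by
    intro s _
    have := rayleigh_lb (hherm s) x
    rwa [hxx, mul_one] at this
  have hfpos : ∀ s ∈ Set.Icc (0:ℝ) T, 0 < f s :=
    fun s hs => (hpos s hs).trans_le (hflb s hs)
  have hft : f t = ⨅ i, (hherm t).eigenvalues i := by
    rw [hf]
    show x ⬝ᵥ (S t *ᵥ x) = _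
    rw [hx, (hherm t).mulVec_eigenvectorBasis i0, dotProduct_smul, ← hx, hxx,
      smul_eq_mul, mul_one, hi0]
  have hderlb : ∀ s ∈ Set.Icc (0:ℝ) T, -(f s)^2 ≤ x ⬝ᵥ (S' s *ᵥ x) := by
    intro s hs
    have h1 := (hineq s hs).dotProduct_mulVec_nonneg x
    have hstar : star x = x := by simp
    rw [hstar, Matrix.add_mulVec, dotProduct_add, Matrix.smul_mulVec,
      dotProduct_smul, smul_eq_mul] at h1
    have h2 := hflb s hs
    have h3 := hfpos s hs
    nlinarith [h1, h2, h3]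
  -- comparison: g s = 1 / f s - s is antitone on [0, t]
  set g : ℝ → ℝ := fun s => 1 / f s - s with hg
  have hIcc : Set.Icc (0:ℝ) t ⊆ Set.Icc (0:ℝ) T := Set.Icc_subset_Icc le_rfl htT
  have hgd : ∀ s ∈ Set.Icc (0:ℝ) t,
      HasDerivAt g (-(x ⬝ᵥ (S' s *ᵥ x)) / (f s)^2 - 1) s := by
    intro s hs
    have hne : f s ≠ 0 := ne_of_gt (hfpos s (hIcc hs))
    have h1 : HasDerivAt (fun u => 1 / f u) (-(x ⬝ᵥ (S' s *ᵥ x)) / (f s)^2) s := by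
      simpa [one_div, neg_div, Pi.inv_def] using (hfd s).inv hne
    simpa [hg, one_div, Pi.sub_def] using h1.sub (hasDerivAt_id s)
  have hanti : AntitoneOn g (Set.Icc 0 t) := by
    apply antitoneOn_of_deriv_nonpos (convex_Icc 0 t)
    · exact fun s hs => (hgd s hs).continuousAt.continuousWithinAt
    · intro s hs
      rw [interior_Icc] at hs
      exact (hgd s (Set.Ioo_subset_Icc_self hs)).differentiableAt.differentiableWithinAt
    · intro s hs
      rw [interior_Icc] at hs
      have hs' := Set.Ioo_subset_Icc_self hs
      rw [(hgd s hs').deriv]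
      have h1 := hderlb s (hIcc hs')
      have h2 : (0:ℝ) < (f s)^2 := pow_pos (hfpos s (hIcc hs')) 2
      have h3 : -(x ⬝ᵥ (S' s *ᵥ x)) / (f s)^2 ≤ 1 := by
        rw [div_le_one h2]; linarith
      linarith
  have hgt : g t ≤ g 0 :=
    hanti (Set.left_mem_Icc.mpr ht0) (Set.right_mem_Icc.mpr ht0) ht0
  -- unpack
  have hf0pos := hfpos 0 h0T
  have hf0lb := hflb 0 h0T
  have hinv0 : 1 / f 0 ≤ 1 / (⨅ i, (hherm 0).eigenvalues i) :=
    one_div_le_one_div_of_le hμ0 hf0lb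
  have key : 1 / (⨅ i, (hherm t).eigenvalues i) ≤ 1 / (⨅ i, (hherm 0).eigenvalues i) + t := by
    have : 1 / f t - t ≤ 1 / f 0 - 0 := hgt
    rw [hft] at this
    linarith
  set a := ⨅ i, (hherm 0).eigenvalues i
  set b := ⨅ i, (hherm t).eigenvalues i
  rw [div_le_iff₀ (by positivity : (0:ℝ) < 1 + t * a)]
  have hmul := mul_le_mul_of_nonneg_left key (le_of_lt (mul_pos hμ0 hμt))
  have e1 : a * b * (1 / b) = a := by field_simp
  have e2 : a * b * (1 / a + t) = b + a * b * t := by field_simp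
  rw [e1, e2] at hmul
  nlinarith [hmul]
end

section
/- Let X = Σ_{i=1}^r d_i u_i u_i^T be symmetric PSD of rank r with distinct positive eigenvalues, and let Z_# = U_# S_# U_#^T be a rank-(r−1) spurious critical point with U_# = (U_1, U_3)P_#^T, S_# = P_# diag(D_1, 0) P_#^T, U_3 ⊥ (u_1,...,u_r), where U_1 = (u_1,...,u_{r−1}), D_1 = diag(d_1,...,d_{r−1}). Define the linear map L(ξ_1) = −(U_# ξ_1^T + ξ_1 U_#^T) X U_# p_{#,r} p_{#,r}^T + P_{U_#}^⊥ X ξ_1 p_{#,r} p_{#,r}^T on ξ_1 ∈ R^{n×r}, where p_{#,r} is the r-th column of P_#. Then ξ_1 = u_r p_{#,r}^T satisfies L(ξ_1) = d_r · ξ_1; i.e., ξ_1 is an eigenvector of L with eigenvalue d_r > 0. -/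
open Matrix

private lemma mul_vmv {n k l : ℕ} (M : Matrix (Fin n) (Fin k) ℝ)
    (a : Fin k → ℝ) (b : Fin l → ℝ) :
    M * Matrix.vecMulVec a b = Matrix.vecMulVec (M *ᵥ a) b := by
  ext i j
  simp [Matrix.mul_apply, Matrix.vecMulVec_apply, Matrix.mulVec, dotProduct,
    Finset.sum_mul, mul_assoc]

private lemma vmv_mul {n k l : ℕ} (a : Fin n → ℝ) (b : Fin k → ℝ)
    (M : Matrix (Fin k) (Fin l) ℝ) :
    Matrix.vecMulVec a b * M = Matrix.vecMulVec a (b ᵥ* M) := by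
  ext i j
  simp [Matrix.mul_apply, Matrix.vecMulVec_apply, Matrix.vecMul, dotProduct,
    Finset.mul_sum, mul_assoc]

private lemma vmv_mulVec {n k : ℕ} (a : Fin n → ℝ) (b : Fin k → ℝ)
    (c : Fin k → ℝ) :
    Matrix.vecMulVec a b *ᵥ c = (b ⬝ᵥ c) • a := by
  ext i
  simp [Matrix.mulVec, Matrix.vecMulVec_apply, dotProduct, Finset.sum_mul,
    Finset.mul_sum, mul_assoc, mul_comm, mul_left_comm]

private lemma sum_mulVec' {n k : ℕ} {ι : Type*} (s : Finset ι)
    (M : ι → Matrix (Fin n) (Fin k) ℝ) (v : Fin k → ℝ) :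
    (∑ i ∈ s, M i) *ᵥ v = ∑ i ∈ s, M i *ᵥ v := by
  ext j
  simp [Matrix.mulVec, dotProduct, Matrix.sum_apply, Finset.sum_mul]
  rw [Finset.sum_comm]

private lemma sum_vecMul' {n k : ℕ} {ι : Type*} (s : Finset ι)
    (M : ι → Matrix (Fin n) (Fin k) ℝ) (v : Fin n → ℝ) :
    v ᵥ* (∑ i ∈ s, M i) = ∑ i ∈ s, v ᵥ* M i := by
  ext j
  simp [Matrix.vecMul, dotProduct, Matrix.sum_apply, Finset.mul_sum]
  rw [Finset.sum_comm]

private lemma vecMul_smul' {n k : ℕ} (v : Fin n → ℝ) (a : ℝ)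
    (M : Matrix (Fin n) (Fin k) ℝ) : v ᵥ* (a • M) = a • (v ᵥ* M) := by
  ext j
  simp [Matrix.vecMul, dotProduct, Finset.mul_sum, mul_left_comm]

private lemma vecMul_vmv {n k : ℕ} (c : Fin n → ℝ) (a : Fin n → ℝ)
    (b : Fin k → ℝ) :
    c ᵥ* Matrix.vecMulVec a b = (c ⬝ᵥ a) • b := by
  ext j
  simp [Matrix.vecMul, Matrix.vecMulVec_apply, dotProduct, Finset.sum_mul,
    mul_assoc]

/-- At a rank-(r−1) spurious critical point of a rank-r SPSD matrix X with
distinct positive eigenvalues, ξ = u_r p_{#,r}ᵀ is an eigenvector of the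
linear map L with eigenvalue d_r > 0. -/
theorem escape_direction_eigenvector (n m : ℕ)
    (d : Fin (m + 1) → ℝ) (hd : ∀ i, 0 < d i) (hdistinct : StrictAnti d)
    (u : Fin (m + 1) → Fin n → ℝ)
    (hu : ∀ i j, u i ⬝ᵥ u j = if i = j then (1 : ℝ) else 0)
    (U3 : Fin n → ℝ) (hU3 : U3 ⬝ᵥ U3 = 1) (hU3u : ∀ i, U3 ⬝ᵥ u i = 0)
    (Ph : Matrix (Fin (m + 1)) (Fin (m + 1)) ℝ)
    (hPh : Phᵀ * Ph = 1 ∧ Ph * Phᵀ = 1)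
    (X : Matrix (Fin n) (Fin n) ℝ)
    (hX : X = ∑ i, d i • Matrix.vecMulVec (u i) (u i))
    (W : Matrix (Fin n) (Fin (m + 1)) ℝ)
    (hW : W = Matrix.of fun a b => if b = Fin.last m then U3 a else u b a)
    (Uh : Matrix (Fin n) (Fin (m + 1)) ℝ) (hUh : Uh = W * Phᵀ)
    (pr : Fin (m + 1) → ℝ) (hpr : pr = fun i => Ph i (Fin.last m))
    (ξ : Matrix (Fin n) (Fin (m + 1)) ℝ)
    (hξ : ξ = Matrix.vecMulVec (u (Fin.last m)) pr) :
    -((Uh * ξᵀ + ξ * Uhᵀ) * X * Uh * Matrix.vecMulVec pr pr) +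
        (1 - Uh * Uhᵀ) * X * ξ * Matrix.vecMulVec pr pr =
      d (Fin.last m) • ξ := by
  set r := Fin.last m
  -- u r is orthogonal to all columns of W
  have hurW : u r ᵥ* W = 0 := by
    ext b
    by_cases hb : b = r
    · subst hb
      simpa [hW, Matrix.vecMul, dotProduct, mul_comm] using hU3u r
    · have := hu r b
      simp only [hW, Matrix.vecMul, dotProduct] at *
      simpa [hb, if_neg (Ne.symm hb)] using this
  have hurUh : u r ᵥ* Uh = 0 := by
    rw [hUh, ← Matrix.vecMul_vecMul, hurW, Matrix.zero_vecMul]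
  -- X action on u r
  have hXur : X *ᵥ u r = d r • u r := by
    rw [hX]
    rw [sum_mulVec']
    simp only [Matrix.smul_mulVec, vmv_mulVec, hu]
    rw [Finset.sum_eq_single r (fun i _ hi => by simp [hi, Ne.symm hi]) (by simp)]
    simp
  have hurX : u r ᵥ* X = d r • u r := by
    rw [hX]
    rw [sum_vecMul']
    simp only [vecMul_smul', vecMul_vmv, hu]
    rw [Finset.sum_eq_single r (fun i _ hi => by simp [hi, Ne.symm hi]) (by simp)]
    simp
  -- U3 annihilates X
  have hU3X : U3 ᵥ* X = 0 := by
    rw [hX]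
    rw [sum_vecMul']
    simp only [vecMul_smul', vecMul_vmv, hU3u]
    simp
  -- Uh *ᵥ pr = U3
  have hPhpr : Phᵀ *ᵥ pr = fun i => if i = r then 1 else 0 := by
    ext i
    have := congrFun (congrFun hPh.1 i) r
    simp only [Matrix.mul_apply, Matrix.one_apply, Matrix.transpose_apply] at this
    simp only [Matrix.mulVec, dotProduct, Matrix.transpose_apply, hpr]
    rw [this]
  have hUhpr : Uh *ᵥ pr = U3 := by
    rw [hUh, ← Matrix.mulVec_mulVec, hPhpr]
    ext a
    simp [Matrix.mulVec, dotProduct, hW]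
  have hprpr : pr ⬝ᵥ pr = 1 := by
    have := congrFun (congrFun hPh.1 r) r
    simp only [Matrix.mul_apply, Matrix.one_apply_eq] at this
    simpa [dotProduct, hpr] using this
  -- transpose of ξ
  have hξT : ξᵀ = Matrix.vecMulVec pr (u r) := by
    ext i j; simp [hξ, Matrix.vecMulVec_apply, mul_comm]
  -- first summand of L is zero
  have h1 : Uh * ξᵀ * X * Uh = 0 := by
    rw [hξT, mul_vmv, hUhpr, vmv_mul, hurX, vmv_mul]
    have : (d r • u r) ᵥ* Uh = 0 := by
      rw [Matrix.smul_vecMul, hurUh, smul_zero]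
    rw [this]
    ext i j; simp [Matrix.vecMulVec_apply]
  have h2 : ξ * Uhᵀ * X * Uh = 0 := by
    rw [hξ, vmv_mul]
    have : pr ᵥ* Uhᵀ = U3 := by rw [Matrix.vecMul_transpose, hUhpr]
    rw [this, vmv_mul, hU3X]
    ext i j; simp [Matrix.vecMulVec_apply, Matrix.mul_apply]
  -- second summand
  have hXξ : X * ξ = d r • ξ := by
    rw [hξ, mul_vmv, hXur]
    ext i j; simp [Matrix.vecMulVec_apply, mul_assoc]
  have hUhξ : Uh * Uhᵀ * ξ = 0 := by
    rw [hξ, Matrix.mul_assoc]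
    have : Uhᵀ * Matrix.vecMulVec (u r) pr = 0 := by
      rw [mul_vmv]
      have : Uhᵀ *ᵥ u r = 0 := by rw [Matrix.mulVec_transpose, hurUh]
      rw [this]
      ext i j; simp [Matrix.vecMulVec_apply]
    rw [this, Matrix.mul_zero]
  have hξpr : ξ * Matrix.vecMulVec pr pr = ξ := by
    rw [hξ, vmv_mul, vecMul_vmv, hprpr, one_smul]
  have lhs1 : (Uh * ξᵀ + ξ * Uhᵀ) * X * Uh = 0 := by
    rw [Matrix.add_mul, Matrix.add_mul, h1, h2, add_zero]
  rw [lhs1, Matrix.zero_mul, neg_zero, zero_add,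
    Matrix.sub_mul, Matrix.one_mul, Matrix.sub_mul,
    Matrix.mul_assoc (Uh * Uhᵀ) X ξ, hXξ,
    Matrix.mul_smul, hUhξ, smul_zero, sub_zero, Matrix.smul_mul, hξpr]
end
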